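/- arXiv:2503.02641 — 3 statements merged into one kernel-verified Lean document; each statement's English description precedes it below -/
import Mathlib

section
/- Let j₁, j₂, j₃ be positive half-integers (elements of ℕ/2, each > 0) satisfying the recoupling (triangle) conditions |j₁ − j₂| ≤ j₃ ≤ j₁ + j₂. Then with f(j) = √(j(j+1)) the strict inequalities |f(j₁) − f(j₂)| < f(j₃) < f(j₁) + f(j₂) hold. -/
private lemma f_mono {a b : ℝ} (ha : 0 ≤ a) (hab : a ≤ b) :
    Real.sqrt (a * (a + 1)) ≤ Real.sqrt (b * (b + 1)) := by
  apply Real.sqrt_le_sqrt; nlinarith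

private lemma f_subadd {a b : ℝ} (ha : 0 < a) (hb : 0 < b) :
    Real.sqrt ((a + b) * ((a + b) + 1)) <
      Real.sqrt (a * (a + 1)) + Real.sqrt (b * (b + 1)) := by
  have hA : (0:ℝ) ≤ a * (a + 1) := by nlinarith
  have hB : (0:ℝ) ≤ b * (b + 1) := by nlinarith
  have hsA := Real.sq_sqrt hA
  have hsB := Real.sq_sqrt hB
  have hAnn := Real.sqrt_nonneg (a * (a + 1))
  have hBnn := Real.sqrt_nonneg (b * (b + 1))
  have hprod : a * b < Real.sqrt (a * (a + 1)) * Real.sqrt (b * (b + 1)) := by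
    rw [← Real.sqrt_mul hA]
    have : (a*b)^2 < a * (a + 1) * (b * (b + 1)) := by nlinarith [mul_pos ha hb, mul_pos (mul_pos ha ha) hb, mul_pos (mul_pos ha hb) hb]
    nlinarith [Real.sq_sqrt (by positivity : (0:ℝ) ≤ a * (a + 1) * (b * (b + 1))),
      Real.sqrt_nonneg (a * (a + 1) * (b * (b + 1)))]
  rw [show Real.sqrt (a * (a + 1)) + Real.sqrt (b * (b + 1))
      = Real.sqrt ((Real.sqrt (a * (a + 1)) + Real.sqrt (b * (b + 1)))^2) from
      (Real.sqrt_sq (by positivity)).symm]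
  apply Real.sqrt_lt_sqrt (by nlinarith)
  nlinarith

/-- Nonzero admissible half-integer spins satisfying the triangle conditions yield
strict triangle inequalities for `f j = √(j(j+1))`. -/
theorem strict_triangle_of_recoupling (j₁ j₂ j₃ : ℝ)
    (h₁ : ∃ n : ℕ, j₁ = n / 2) (h₂ : ∃ n : ℕ, j₂ = n / 2) (h₃ : ∃ n : ℕ, j₃ = n / 2)
    (hp₁ : 0 < j₁) (hp₂ : 0 < j₂) (hp₃ : 0 < j₃)
    (htri₁ : |j₁ - j₂| ≤ j₃) (htri₂ : j₃ ≤ j₁ + j₂) :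
    |Real.sqrt (j₁ * (j₁ + 1)) - Real.sqrt (j₂ * (j₂ + 1))| < Real.sqrt (j₃ * (j₃ + 1)) ∧
    Real.sqrt (j₃ * (j₃ + 1)) < Real.sqrt (j₁ * (j₁ + 1)) + Real.sqrt (j₂ * (j₂ + 1)) := by
  constructor
  · rw [abs_lt]
    have key : ∀ a b : ℝ, 0 < a → 0 < b → |a - b| ≤ j₃ →
        Real.sqrt (a * (a + 1)) - Real.sqrt (b * (b + 1)) < Real.sqrt (j₃ * (j₃ + 1)) := by
      intro a b ha hb habs
      rcases le_or_gt a b with h | h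
      · have := f_mono ha.le h
        have : (0:ℝ) < Real.sqrt (j₃ * (j₃ + 1)) := Real.sqrt_pos.mpr (by nlinarith)
        linarith [f_mono ha.le h]
      · have hd : 0 < a - b := by linarith
        have h1 := f_subadd hd hb
        have h2 : a - b ≤ j₃ := by
          have := abs_le.mp habs; linarith [this.2]
        have h3 := f_mono hd.le h2
        have : (a - b) + b = a := by ring
        rw [this] at h1
        linarith
    constructor
    · have := key j₂ j₁ hp₂ hp₁ (by rwa [abs_sub_comm]); linarith
    · exact key j₁ j₂ hp₁ hp₂ htri₁
  · calc Real.sqrt (j₃ * (j₃ + 1)) ≤ Real.sqrt ((j₁ + j₂) * ((j₁ + j₂) + 1)) :=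
          f_mono hp₃.le htri₂
      _ < _ := f_subadd hp₁ hp₂
end

section
/- Consider the phase space ℝ² with coordinates (ρ, η) (restricted to η > 0) and Poisson bracket determined by {ρ, η} = κ/a², where κ, a > 0. Set t = κħ/a², χ(η) = √((η/t)² + 1/4) − 1/2, and r(η) = √(η² + t²/4)/η. Then {e^{i r(η) ρ}, χ(η)} = (i/ħ)·e^{i r(η) ρ}, and more generally {e^{±i r(η) ρ}, χ(η)} = ±(i/ħ)·e^{±i r(η) ρ}. -/
open Complex

/-- The Poisson bracket `{f, g} = (κ/a²)(∂f/∂ρ ∂g/∂η − ∂f/∂η ∂g/∂ρ)` of two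
(complex-valued) functions of the phase-space coordinates `(ρ, η)`. -/
noncomputable def poissonBracket (κ a : ℝ) (f g : ℝ → ℝ → ℂ) (ρ η : ℝ) : ℂ :=
  ((κ / a ^ 2 : ℝ) : ℂ) *
    (deriv (fun ρ' => f ρ' η) ρ * deriv (fun η' => g ρ η') η -
     deriv (fun η' => f ρ η') η * deriv (fun ρ' => g ρ' η) ρ)

/-- Classical shift relation: `{e^{±i r(η)ρ}, χ(η)} = ±(i/hbar) e^{±i r(η)ρ}`, where
`t = κhbar/a²`, `χ(η) = √((η/t)² + 1/4) − 1/2` and `r(η) = √(η² + t²/4)/η`. -/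
theorem poissonBracket_exp_chi (κ a hbar : ℝ) (hκ : 0 < κ) (ha : 0 < a) (hb : 0 < hbar)
    (t : ℝ) (ht : t = κ * hbar / a ^ 2)
    (χ : ℝ → ℝ) (hχ : ∀ η, χ η = Real.sqrt ((η / t) ^ 2 + 1 / 4) - 1 / 2)
    (r : ℝ → ℝ) (hr : ∀ η, r η = Real.sqrt (η ^ 2 + t ^ 2 / 4) / η)
    (ρ η : ℝ) (hη : 0 < η) :
    poissonBracket κ a (fun ρ' η' => Complex.exp (I * (r η' : ℂ) * (ρ' : ℂ)))
        (fun _ η' => ((χ η' : ℝ) : ℂ)) ρ η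
      = (I / (hbar : ℂ)) * Complex.exp (I * (r η : ℂ) * (ρ : ℂ)) ∧
    ∀ s : ℝ, s = 1 ∨ s = -1 →
      poissonBracket κ a (fun ρ' η' => Complex.exp ((s : ℂ) * I * (r η' : ℂ) * (ρ' : ℂ)))
          (fun _ η' => ((χ η' : ℝ) : ℂ)) ρ η
        = (s : ℂ) * (I / (hbar : ℂ)) * Complex.exp ((s : ℂ) * I * (r η : ℂ) * (ρ : ℂ)) := by
  have ht0 : 0 < t := by rw [ht]; positivity
  have hsqpos : (0:ℝ) < (η / t) ^ 2 + 1 / 4 := by positivity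
  have hsq : (0:ℝ) < Real.sqrt ((η / t) ^ 2 + 1 / 4) := Real.sqrt_pos.mpr hsqpos
  have hsq2 : Real.sqrt (η ^ 2 + t ^ 2 / 4) = t * Real.sqrt ((η / t) ^ 2 + 1 / 4) := by
    rw [show η ^ 2 + t ^ 2 / 4 = t ^ 2 * ((η / t) ^ 2 + 1 / 4) by field_simp,
      Real.sqrt_mul (by positivity), Real.sqrt_sq ht0.le]
  set d : ℝ := 2 * (η / t) ^ 1 * (1 / t) / (2 * Real.sqrt ((η / t) ^ 2 + 1 / 4)) with hd
  have hχd : HasDerivAt χ d η := by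
    have hχf : χ = fun η' => Real.sqrt ((η' / t) ^ 2 + 1 / 4) - 1 / 2 := funext hχ
    rw [hχf]
    exact (((((hasDerivAt_id η).div_const t).pow 2).add_const (1 / 4)).sqrt
      hsqpos.ne').sub_const (1 / 2)
  have hkey : (κ / a ^ 2) * (r η * d) = 1 / hbar := by
    rw [hd, hr, hsq2, ht]
    field_simp
  have main : ∀ s : ℝ,
      poissonBracket κ a (fun ρ' η' => Complex.exp ((s : ℂ) * I * (r η' : ℂ) * (ρ' : ℂ)))
          (fun _ η' => ((χ η' : ℝ) : ℂ)) ρ η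
        = (s : ℂ) * (I / (hbar : ℂ)) * Complex.exp ((s : ℂ) * I * (r η : ℂ) * (ρ : ℂ)) := by
    intro s
    have hdρ : deriv (fun ρ' : ℝ => Complex.exp ((s : ℂ) * I * (r η : ℂ) * (ρ' : ℂ))) ρ
        = (s : ℂ) * I * (r η : ℂ) * Complex.exp ((s : ℂ) * I * (r η : ℂ) * (ρ : ℂ)) := by
      have h : HasDerivAt (fun ρ' : ℝ => (s : ℂ) * I * (r η : ℂ) * (ρ' : ℂ))
          ((s : ℂ) * I * (r η : ℂ)) ρ := by
        simpa using ((hasDerivAt_id ρ).ofReal_comp.const_mul ((s : ℂ) * I * (r η : ℂ)))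
      simpa [mul_comm] using h.cexp.deriv
    have hdη : deriv (fun η' : ℝ => ((χ η' : ℝ) : ℂ)) η = (d : ℂ) :=
      hχd.ofReal_comp.deriv
    have hkey' : ((κ / a ^ 2 : ℝ) : ℂ) * ((r η : ℂ) * (d : ℂ)) = 1 / (hbar : ℂ) := by
      norm_cast
    unfold poissonBracket
    rw [hdρ, hdη]
    simp only [deriv_const', mul_zero, sub_zero]
    linear_combination ((s : ℂ) * I * Complex.exp ((s : ℂ) * I * (r η : ℂ) * (ρ : ℂ))) * hkey'
  refine ⟨?_, fun s _ => main s⟩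
  simpa using main 1
end

section
/- Let N ≥ 2, λ ∈ ℂ, and suppose (c₁, …, c_N) ∈ ℂ^N is a nonzero solution of the system c_{j−1} − c_{j+1} = 2iλ c_j for 2 ≤ j ≤ N−1, together with c_{N−1} = 2iλ c_N and −c₂ = 2iλ c₁. Then there exists k ∈ {1, …, N} with λ = cos(kπ/(N+1)); conversely, for each such k a nonzero solution exists. -/
open Complex

/-- The Chebyshev-like recursion `u₀ = 0`, `u₁ = 1`, `u_{n+2} = 2λ u_{n+1} − u_n`
(values of the Chebyshev polynomials of the second kind at `λ`). -/
noncomputable def cheb (lam : ℂ) : ℕ → ℂ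
  | 0 => 0
  | 1 => 1
  | (n+2) => 2*lam*cheb lam (n+1) - cheb lam n

lemma cheb_zero (lam : ℂ) : cheb lam 0 = 0 := rfl
lemma cheb_one (lam : ℂ) : cheb lam 1 = 1 := rfl
lemma cheb_add_two (lam : ℂ) (n : ℕ) :
    cheb lam (n+2) = 2*lam*cheb lam (n+1) - cheb lam n := rfl
lemma cheb_two (lam : ℂ) : cheb lam 2 = 2*lam := by
  rw [show (2:ℕ) = 0+2 from rfl, cheb_add_two, cheb_zero, cheb_one]; ring

lemma sin_sum_complex (a t : ℂ) :
    Complex.sin (a + 2*t) + Complex.sin a = 2 * Complex.cos t * Complex.sin (a + t) := by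
  rw [show a + 2*t = (a+t)+t by ring, show a = (a+t)-t by ring,
    Complex.sin_add, Complex.sin_sub]
  ring_nf

lemma sin_rec_real (a t : ℝ) :
    Real.sin (a + 2*t) + Real.sin a = 2 * Real.cos t * Real.sin (a + t) := by
  rw [show a + 2*t = (a+t)+t by ring, show a = (a+t)-t by ring,
    Real.sin_add, Real.sin_sub]
  ring_nf

lemma cheb_mul_sin (z : ℂ) :
    ∀ n : ℕ, cheb (Complex.cos z) n * Complex.sin z = Complex.sin (n * z) := by
  have key : ∀ n : ℕ, cheb (Complex.cos z) n * Complex.sin z = Complex.sin (n * z) ∧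
      cheb (Complex.cos z) (n+1) * Complex.sin z = Complex.sin ((n+1 : ℕ) * z) := by
    intro n
    induction n with
    | zero => simp [cheb_zero, cheb_one]
    | succ n ih =>
      constructor
      · exact_mod_cast ih.2
      · rw [cheb_add_two]
        have h := sin_sum_complex (n * z) z
        have h1 := ih.1
        have h2 := ih.2
        push_cast at h1 h2 ⊢
        rw [show (n:ℂ) * z + 2*z = ((n:ℂ)+1+1) * z by ring,
          show (n:ℂ) * z + z = ((n:ℂ)+1) * z by ring] at h
        linear_combination 2 * Complex.cos z * h2 - h1 - h
  exact fun n => (key n).1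

lemma cheb_of_sq_one (lam : ℂ) (h : lam^2 = 1) :
    ∀ n : ℕ, cheb lam n = n * lam^(n+1) := by
  have key : ∀ n : ℕ, cheb lam n = n * lam^(n+1) ∧
      cheb lam (n+1) = ((n+1 : ℕ)) * lam^(n+2) := by
    intro n
    induction n with
    | zero => simp [cheb_zero, cheb_one, h]
    | succ n ih =>
      constructor
      · exact_mod_cast ih.2
      · rw [cheb_add_two]
        have h1 := ih.1
        have h2 := ih.2
        push_cast at h1 h2 ⊢
        rw [h1, h2]
        linear_combination ((n:ℂ)*lam^(n+1)) * h
  exact fun n => (key n).1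

lemma find_k (L : ℕ) (hL : 3 ≤ L) (m : ℤ)
    (hm : Real.sin (m * Real.pi / L) ≠ 0) :
    ∃ k : ℕ, 1 ≤ k ∧ k ≤ L - 1 ∧
      Real.cos (m * Real.pi / L) = Real.cos (k * Real.pi / L) := by
  have hL0 : (L:ℝ) ≠ 0 := by positivity
  set q : ℤ := m / (2*L) with hq
  set r : ℤ := m % (2*L) with hr
  have h2L : (0:ℤ) < 2*L := by positivity
  have hr0 : 0 ≤ r := Int.emod_nonneg m (by omega)
  have hrlt : r < 2*L := Int.emod_lt_of_pos m h2L
  have hmod : m = 2*L*q + r := (Int.mul_ediv_add_emod m (2*L)).symm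
  have harg : (m:ℝ) * Real.pi / L = (r:ℝ) * Real.pi / L + (q:ℝ) * (2*Real.pi) := by
    have : (m:ℝ) = 2*L*q + r := by exact_mod_cast congrArg (fun z : ℤ => (z:ℝ)) hmod
    field_simp [this]
    linear_combination this
  have hcos : Real.cos ((m:ℝ) * Real.pi / L) = Real.cos ((r:ℝ) * Real.pi / L) := by
    rw [harg, Real.cos_add_int_mul_two_pi]
  have hsin : Real.sin ((m:ℝ) * Real.pi / L) = Real.sin ((r:ℝ) * Real.pi / L) := by
    rw [harg, Real.sin_add_int_mul_two_pi]
  set n : ℕ := r.toNat with hn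
  have hnr : (n:ℤ) = r := Int.toNat_of_nonneg hr0
  have hnrR : (n:ℝ) = (r:ℝ) := by exact_mod_cast congrArg (fun z : ℤ => (z:ℝ)) hnr
  have hnlt : n < 2*L := by omega
  rcases lt_trichotomy n L with hc | hc | hc
  · rcases Nat.eq_zero_or_pos n with h0 | h1
    · exfalso
      apply hm
      rw [hsin, ← hnrR, h0]
      simp
    · exact ⟨n, h1, by omega, by rw [hcos, hnrR]⟩
  · exfalso
    apply hm
    rw [hsin, ← hnrR, hc]
    rw [show (L:ℝ) * Real.pi / L = Real.pi by field_simp]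
    exact Real.sin_pi
  · refine ⟨2*L - n, by omega, by omega, ?_⟩
    rw [hcos, ← hnrR]
    have hk : ((2*L - n : ℕ) : ℝ) = 2*L - n := by
      push_cast [Nat.cast_sub (by omega : n ≤ 2*L)]
      ring
    rw [hk, show (n:ℝ) * Real.pi / L = -((2*L - n) * Real.pi / L) + 2*Real.pi by
      field_simp; ring, Real.cos_add_two_pi, Real.cos_neg]

/-- Eigenvalue condition for the regularized extrinsic-curvature difference system:
a nonzero solution of `c_{j−1} − c_{j+1} = 2iλ c_j` (for `2 ≤ j ≤ N−1`) with the
boundary equations `c_{N−1} = 2iλ c_N` and `−c₂ = 2iλ c₁` exists exactly when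
`λ = cos(kπ/(N+1))` for some `k ∈ {1,…,N}`. -/
theorem omega_eigenvalue_condition (N : ℕ) (hN : 2 ≤ N) :
    (∀ (lam : ℂ) (c : ℕ → ℂ),
      (∃ j : ℕ, 1 ≤ j ∧ j ≤ N ∧ c j ≠ 0) →
      (∀ j : ℕ, 2 ≤ j → j ≤ N - 1 → c (j - 1) - c (j + 1) = 2 * I * lam * c j) →
      c (N - 1) = 2 * I * lam * c N →
      -c 2 = 2 * I * lam * c 1 →
      ∃ k : ℕ, 1 ≤ k ∧ k ≤ N ∧ lam = ((Real.cos (k * Real.pi / (N + 1)) : ℝ) : ℂ)) ∧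
    (∀ k : ℕ, 1 ≤ k → k ≤ N → ∃ c : ℕ → ℂ,
      (∃ j : ℕ, 1 ≤ j ∧ j ≤ N ∧ c j ≠ 0) ∧
      (∀ j : ℕ, 2 ≤ j → j ≤ N - 1 →
        c (j - 1) - c (j + 1) =
          2 * I * ((Real.cos (k * Real.pi / (N + 1)) : ℝ) : ℂ) * c j) ∧
      c (N - 1) = 2 * I * ((Real.cos (k * Real.pi / (N + 1)) : ℝ) : ℂ) * c N ∧
      -c 2 = 2 * I * ((Real.cos (k * Real.pi / (N + 1)) : ℝ) : ℂ) * c 1) := by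
  obtain ⟨M, rfl⟩ : ∃ M, N = M + 2 := ⟨N - 2, by omega⟩
  constructor
  · -- necessity
    intro lam c hex hint htop hbot
    -- reduce to the Chebyshev recursion via `b j = I^j c j`
    have key : ∀ j, 1 ≤ j → j ≤ M+2 → I^j * c j = (I * c 1) * cheb lam j := by
      intro j
      induction j using Nat.strong_induction_on with
      | _ j IH =>
        rcases j with _ | (_ | (_ | j))
        · omega
        · intro _ _; rw [cheb_one]; ring
        · intro _ _
          rw [cheb_two]
          linear_combination (-(I^2))*hbot + (-2*lam*I*c 1)*Complex.I_sq
        · intro _ hle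
          have h1 := IH (j+1) (by omega) (by omega) (by omega)
          have h2 := IH (j+2) (by omega) (by omega) (by omega)
          have hrec := hint (j+2) (by omega) (by omega)
          rw [show j+2-1 = j+1 from rfl] at hrec
          rw [show j+3 = (j+1)+2 from rfl, cheb_add_two]
          linear_combination (-(I^(j+1))*I^2) * hrec - h1 + 2*lam*h2 +
            (I^(j+1)*c (j+1) - 2*lam*I^(j+1)*I*c (j+2)) * Complex.I_sq
    have hc1 : c 1 ≠ 0 := by
      intro h0
      obtain ⟨j, hj1, hj2, hjne⟩ := hex
      have hk := key j hj1 hj2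
      rw [h0] at hk
      simp only [mul_zero, zero_mul] at hk
      exact hjne ((mul_eq_zero.mp hk).resolve_left (pow_ne_zero _ I_ne_zero))
    have hb1 : I * c 1 ≠ 0 := mul_ne_zero I_ne_zero hc1
    have k1 := key (M+1) (by omega) (by omega)
    have k2 := key (M+2) (by omega) (by omega)
    rw [show M+2-1 = M+1 from rfl] at htop
    have hz0 : (I * c 1) * cheb lam (M+3) = 0 := by
      rw [show M+3 = (M+1)+2 from rfl, cheb_add_two]
      linear_combination k1 - 2*lam*k2 - I^(M+1)*htop
    have hU : cheb lam (M+3) = 0 := (mul_eq_zero.mp hz0).resolve_left hb1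
    -- extract the eigenvalue
    obtain ⟨z, hz⟩ := Complex.cos_surjective lam
    by_cases hs : Complex.sin z = 0
    · exfalso
      have hsc := Complex.sin_sq_add_cos_sq z
      rw [hs, hz] at hsc
      have hl2 : lam^2 = 1 := by linear_combination hsc
      have hv := cheb_of_sq_one lam hl2 (M+3)
      rw [hU] at hv
      have hlam0 : lam ≠ 0 := by
        intro h0; rw [h0] at hl2; simp at hl2
      have hne : ((M+3 : ℕ) : ℂ) * lam^(M+3+1) ≠ 0 :=
        mul_ne_zero (by exact_mod_cast (by omega : (M+3 : ℕ) ≠ 0)) (pow_ne_zero _ hlam0)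
      exact hne hv.symm
    · have hsin := cheb_mul_sin z (M+3)
      rw [hz, hU, zero_mul] at hsin
      obtain ⟨m, hm⟩ := Complex.sin_eq_zero_iff.mp hsin.symm
      set x : ℝ := m * Real.pi / ((M+3 : ℕ) : ℝ) with hx
      have hM3 : ((M+3 : ℕ) : ℂ) ≠ 0 := by exact_mod_cast (by omega : (M+3:ℕ) ≠ 0)
      have hzx : z = (x : ℂ) := by
        have hzq : z = (m : ℂ) * (Real.pi : ℂ) / ((M+3 : ℕ) : ℂ) := by
          rw [eq_div_iff hM3]
          push_cast at hm ⊢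
          linear_combination hm
        rw [hzq, hx]
        push_cast
        ring
      have hsinx : Real.sin x ≠ 0 := by
        intro h0
        apply hs
        rw [hzx, ← Complex.ofReal_sin, h0, Complex.ofReal_zero]
      obtain ⟨k, hk1, hk2, hkc⟩ := find_k (M+3) (by omega) m hsinx
      refine ⟨k, hk1, by omega, ?_⟩
      rw [← hz, hzx, ← Complex.ofReal_cos, hx, hkc]
      norm_num
      ring_nf
  · -- sufficiency
    intro k hk1 hk2
    set θ : ℝ := k * Real.pi / ((M+2 : ℕ) + 1) with hθ
    have hpos : 0 < θ := by
      apply div_pos (by positivity)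
      positivity
    have hlt : θ < Real.pi := by
      have hkR : (k:ℝ) ≤ (M:ℝ)+2 := by exact_mod_cast hk2
      rw [hθ, div_lt_iff₀ (by positivity)]
      push_cast
      nlinarith [Real.pi_pos]
    refine ⟨fun j => (-I)^j * ((Real.sin (j * θ) : ℝ) : ℂ), ?_, ?_, ?_, ?_⟩
    · have hsθ := Real.sin_pos_of_pos_of_lt_pi hpos hlt
      refine ⟨1, le_refl 1, by omega, ?_⟩
      simp only [pow_one, Nat.cast_one, one_mul]
      exact mul_ne_zero (neg_ne_zero.mpr I_ne_zero)
        (Complex.ofReal_ne_zero.mpr (ne_of_gt hsθ))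
    · intro j hj2 hjN
      obtain ⟨m, rfl⟩ : ∃ m, j = m + 2 := ⟨j - 2, by omega⟩
      have ht := sin_rec_real (((m+1:ℕ):ℝ) * θ) θ
      rw [show ((m+1:ℕ):ℝ)*θ + 2*θ = ((m+3:ℕ):ℝ)*θ by push_cast; ring,
          show ((m+1:ℕ):ℝ)*θ + θ = ((m+2:ℕ):ℝ)*θ by push_cast; ring] at ht
      have hC : ((Real.sin ((m+3:ℕ)*θ) : ℝ) : ℂ) + ((Real.sin ((m+1:ℕ)*θ) : ℝ) : ℂ)
          = 2 * ((Real.cos θ : ℝ) : ℂ) * ((Real.sin ((m+2:ℕ)*θ) : ℝ) : ℂ) := by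
        exact_mod_cast congrArg (fun r : ℝ => (r:ℂ)) ht
      show (-I)^(m+1) * _ - (-I)^(m+3) * _ = _
      rw [show m+2-1 = m+1 from rfl]
      linear_combination ((-I)^(m+1)) * hC +
        (2*((Real.cos θ : ℝ):ℂ)*(-I)^(m+1)*((Real.sin ((m+2:ℕ)*θ) : ℝ):ℂ)
          - (-I)^(m+1)*((Real.sin ((m+3:ℕ)*θ) : ℝ):ℂ)) * Complex.I_sq
    · have h0 : Real.sin ((M+3:ℕ)*θ) = 0 := by
        rw [show ((M+3:ℕ):ℝ)*θ = k * Real.pi by rw [hθ]; push_cast; field_simp; ring]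
        exact Real.sin_nat_mul_pi k
      have ht := sin_rec_real (((M+1:ℕ):ℝ) * θ) θ
      rw [show ((M+1:ℕ):ℝ)*θ + 2*θ = ((M+3:ℕ):ℝ)*θ by push_cast; ring,
          show ((M+1:ℕ):ℝ)*θ + θ = ((M+2:ℕ):ℝ)*θ by push_cast; ring, h0] at ht
      have hC : ((Real.sin ((M+1:ℕ)*θ) : ℝ) : ℂ)
          = 2 * ((Real.cos θ : ℝ) : ℂ) * ((Real.sin ((M+2:ℕ)*θ) : ℝ) : ℂ) := by
        exact_mod_cast congrArg (fun r : ℝ => (r:ℂ))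
          (by linarith : Real.sin (((M+1:ℕ):ℝ)*θ) = 2 * Real.cos θ * Real.sin (((M+2:ℕ):ℝ)*θ))
      show (-I)^(M+2-1) * _ = _
      rw [show M+2-1 = M+1 from rfl]
      linear_combination ((-I)^(M+1)) * hC +
        (2*((Real.cos θ : ℝ):ℂ)*(-I)^(M+1)*((Real.sin ((M+2:ℕ)*θ) : ℝ):ℂ)) * Complex.I_sq
    · have h1 : Real.sin (((0:ℕ):ℝ)*θ) = 0 := by norm_num
      have ht := sin_rec_real (((0:ℕ):ℝ) * θ) θ
      rw [show ((0:ℕ):ℝ)*θ + 2*θ = ((2:ℕ):ℝ)*θ by push_cast; ring,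
          show ((0:ℕ):ℝ)*θ + θ = ((1:ℕ):ℝ)*θ by push_cast; ring, h1] at ht
      have hC : ((Real.sin ((2:ℕ)*θ) : ℝ) : ℂ)
          = 2 * ((Real.cos θ : ℝ) : ℂ) * ((Real.sin ((1:ℕ)*θ) : ℝ) : ℂ) := by
        exact_mod_cast congrArg (fun r : ℝ => (r:ℂ))
          (by linarith : Real.sin (((2:ℕ):ℝ)*θ) = 2 * Real.cos θ * Real.sin (((1:ℕ):ℝ)*θ))
      show -((-I)^2 * _) = 2 * I * _ * ((-I)^1 * _)
      linear_combination hC +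
        (2*((Real.cos θ : ℝ):ℂ)*((Real.sin ((1:ℕ)*θ) : ℝ):ℂ)
          - ((Real.sin ((2:ℕ)*θ) : ℝ):ℂ)) * Complex.I_sq
end
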